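/- arXiv:2305.07249 — 7 statements merged into one kernel-verified Lean document; each statement's English description precedes it below -/
import Mathlib

section
/- Let n ≥ 1 be an integer, let x ∈ ℝⁿ, and let λ be a real number with 0 < λ < √(1 + |x|²). Then for every z ∈ ℝⁿ with |z − x| > λ one has λ²(1 + |z|²) < |z − x|²(1 + |z^{x,λ}|²); equivalently, L(x,λ,z) := λ²(1 + |z|²) / (|z − x|²(1 + |z^{x,λ}|²)) < 1. -/
/-- Inversion of `z` in the sphere of radius `l` centered at `x`. -/
noncomputable def sphereInversion {n : ℕ} (x : EuclideanSpace ℝ (Fin n)) (l : ℝ)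
    (ξ : EuclideanSpace ℝ (Fin n)) : EuclideanSpace ℝ (Fin n) :=
  x + (l ^ 2 / ‖ξ - x‖ ^ 2) • (ξ - x)

/-- for `0 < λ < √(1 + |x|²)` and `|z − x| > λ`, one has
    `λ²(1 + |z|²) < |z − x|²(1 + |z^{x,λ}|²)`, i.e. `L(x,λ,z) < 1`. -/
theorem stmt_5 (n : ℕ) (hn : 1 ≤ n) (x : EuclideanSpace ℝ (Fin n)) (l : ℝ)
    (hl : 0 < l) (hl' : l < Real.sqrt (1 + ‖x‖ ^ 2)) :
    ∀ z : EuclideanSpace ℝ (Fin n), l < ‖z - x‖ →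
      l ^ 2 * (1 + ‖z‖ ^ 2) < ‖z - x‖ ^ 2 * (1 + ‖sphereInversion x l z‖ ^ 2)
        ∧ l ^ 2 * (1 + ‖z‖ ^ 2) / (‖z - x‖ ^ 2 * (1 + ‖sphereInversion x l z‖ ^ 2)) < 1 := by
  have hx : l ^ 2 < 1 + ‖x‖ ^ 2 := by
    have h := Real.sq_sqrt (by positivity : (0:ℝ) ≤ 1 + ‖x‖ ^ 2)
    nlinarith [Real.sqrt_nonneg (1 + ‖x‖ ^ 2)]
  intro z hz
  have hr : 0 < ‖z - x‖ := lt_trans hl hz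
  set r : ℝ := ‖z - x‖ with hrdef
  set c : ℝ := l ^ 2 / r ^ 2 with hcdef
  have hc : c * r ^ 2 = l ^ 2 := by
    rw [hcdef, div_mul_cancel₀ _ (pow_ne_zero 2 hr.ne')]
  have hc0 : 0 ≤ c := by positivity
  have hz2 : ‖z‖ ^ 2 = ‖x‖ ^ 2 + 2 * inner ℝ x (z - x) + r ^ 2 := by
    have h := norm_add_sq_real x (z - x)
    simpa using h
  have hinv2 : ‖sphereInversion x l z‖ ^ 2
      = ‖x‖ ^ 2 + 2 * (c * inner ℝ x (z - x)) + c ^ 2 * r ^ 2 := by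
    have h := norm_add_sq_real x (c • (z - x))
    rw [real_inner_smul_right, norm_smul] at h
    simp only [Real.norm_eq_abs, abs_of_nonneg hc0] at h
    have : sphereInversion x l z = x + c • (z - x) := rfl
    rw [this, h]
    ring
  have key : l ^ 2 * (1 + ‖z‖ ^ 2) < r ^ 2 * (1 + ‖sphereInversion x l z‖ ^ 2) := by
    rw [hz2, hinv2]
    have hc2 : c ^ 2 * r ^ 2 * r ^ 2 = l ^ 2 * l ^ 2 := by
      nlinarith [hc]
    have h3 : c * inner ℝ x (z - x) * r ^ 2 = l ^ 2 * inner ℝ x (z - x) := by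
      rw [mul_right_comm, hc]
    have hA : 0 < r ^ 2 - l ^ 2 := by nlinarith
    have hB : 0 < 1 + ‖x‖ ^ 2 - l ^ 2 := by nlinarith
    nlinarith [mul_pos hA hB, h3, hc2]
  refine ⟨key, ?_⟩
  have hpos : 0 < r ^ 2 * (1 + ‖sphereInversion x l z‖ ^ 2) := by positivity
  exact (div_lt_one hpos).mpr key
end

section
/- Let u be a positive continuous solution of the integral equation (IE). Then for every x ∈ ℝⁿ, every λ > 0, and every ξ ∈ ℝⁿ with ξ ≠ x, the Kelvin transform u_{x,λ} satisfies u_{x,λ}(ξ) = γ ∫_{ℝⁿ} |ξ − z|^{2s−n} [ ε (2λ²/(1 + |z^{x,λ}|²))^{2s} |z − x|^{−4s} u_{x,λ}(z) + (2λ²/(1 + |z^{x,λ}|²))^{σ} |z − x|^{−2σ} u_{x,λ}(z)^{α} ] dz, where the integral is taken over z ∈ ℝⁿ \ {x} and the integrand is Lebesgue integrable. -/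
open MeasureTheory

/-- The Kelvin transform `u_{x,λ}` of `u` (with exponent `n − 2s`). -/
noncomputable def kelvin {n : ℕ} (s : ℝ) (u : EuclideanSpace ℝ (Fin n) → ℝ)
    (x : EuclideanSpace ℝ (Fin n)) (l : ℝ) (ξ : EuclideanSpace ℝ (Fin n)) : ℝ :=
  (l / ‖ξ - x‖) ^ ((n : ℝ) - 2 * s) * u (sphereInversion x l ξ)

/-- The nonlinearity `F_{ε,u}(y) = ε (2/(1+|y|²))^{2s} u(y) + (2/(1+|y|²))^{σ} u(y)^{α}`. -/
noncomputable def ieF {n : ℕ} (s σ α ε : ℝ) (u : EuclideanSpace ℝ (Fin n) → ℝ)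
    (y : EuclideanSpace ℝ (Fin n)) : ℝ :=
  ε * (2 / (1 + ‖y‖ ^ 2)) ^ (2 * s) * u y + (2 / (1 + ‖y‖ ^ 2)) ^ σ * u y ^ α

/-- `u` is a positive continuous solution of the integral equation (IE). -/
def IsIESolution {n : ℕ} (s σ α ε γ : ℝ) (u : EuclideanSpace ℝ (Fin n) → ℝ) : Prop :=
  Continuous u ∧ (∀ y, 0 < u y) ∧
    ∀ x : EuclideanSpace ℝ (Fin n),
      Integrable (fun y => ‖x - y‖ ^ (2 * s - (n : ℝ)) * ieF s σ α ε u y) ∧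
      u x = γ * ∫ y, ‖x - y‖ ^ (2 * s - (n : ℝ)) * ieF s σ α ε u y

lemma sphereInversion_eq {n : ℕ} (x : EuclideanSpace ℝ (Fin n)) (l : ℝ) :
    sphereInversion x l = EuclideanGeometry.inversion x l := by
  funext ξ
  simp only [sphereInversion, EuclideanGeometry.inversion, vsub_eq_sub, vadd_eq_add,
    dist_eq_norm, div_pow, add_comm]

lemma abs_det_smul_involutive {F : Type*} [NormedAddCommGroup F] [InnerProductSpace ℝ F]
    [FiniteDimensional ℝ F] (c : ℝ) (hc : 0 ≤ c) (A : F →L[ℝ] F) (hA : ∀ y, A (A y) = y) :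
    |(c • A).det| = c ^ Module.finrank ℝ F := by
  have h1 : (c • A).det = c ^ Module.finrank ℝ F * A.det := by
    rw [ContinuousLinearMap.det, ContinuousLinearMap.coe_smul, LinearMap.det_smul]
  have h2 : A.det * A.det = 1 := by
    rw [ContinuousLinearMap.det, ← LinearMap.det_comp]
    have : (A : F →ₗ[ℝ] F) ∘ₗ (A : F →ₗ[ℝ] F) = LinearMap.id := by
      ext y; exact hA y
    rw [this, LinearMap.det_id]
  have h3 : |A.det| = 1 := by
    rcases mul_self_eq_one_iff.1 h2 with h | h <;> rw [h] <;> norm_num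
  rw [h1, abs_mul, h3, mul_one, abs_pow, abs_of_nonneg hc]

/-- The purely computational identity. -/
lemma keyCalc (s σ α ε N l d r q t K : ℝ) (hl : 0 < l) (hd : 0 < d) (hr : 0 < r)
    (hq : 0 < q) (ht : 0 ≤ t) (hK : 0 < K) (hsN : 2 * s - N ≠ 0)
    (hσ : σ = (N + 2 * s) / 2 - α * (N - 2 * s) / 2) :
    (l / d) ^ (2 * N) *
      ((l ^ 2 / (r * d) * t) ^ (2 * s - N) *
        (ε * (2 / q) ^ (2 * s) * ((d / l) ^ (N - 2 * s) * K) +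
          (2 / q) ^ σ * ((d / l) ^ ((N - 2 * s) * α) * K ^ α)))
    = (r / l) ^ (N - 2 * s) *
        (t ^ (2 * s - N) *
          (ε * (2 * l ^ 2 / q) ^ (2 * s) * d ^ (-(4 * s)) * K +
            (2 * l ^ 2 / q) ^ σ * d ^ (-(2 * σ)) * K ^ α)) := by
  subst hσ
  rcases eq_or_lt_of_le ht with h0 | ht
  · rw [← h0, mul_zero, Real.zero_rpow hsN]
    ring
  have hld : 0 < l / d := by positivity
  have hdl : 0 < d / l := by positivity
  have hrl : 0 < r / l := by positivity
  have h2q : 0 < 2 / q := by positivity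
  have h2lq : 0 < 2 * l ^ 2 / q := by positivity
  have hb : 0 < l ^ 2 / (r * d) * t := by positivity
  have hl2 : (0:ℝ) < l ^ 2 := by positivity
  have hrd : (0:ℝ) < r * d := by positivity
  have h2l2 : (0:ℝ) < 2 * l ^ 2 := by positivity
  have hlog2 : Real.log (l ^ 2) = 2 * Real.log l := by
    rw [Real.log_pow]; push_cast; ring
  have L1 : Real.log (l / d) = Real.log l - Real.log d := Real.log_div hl.ne' hd.ne'
  have L2 : Real.log (l ^ 2 / (r * d) * t) =
      2 * Real.log l - (Real.log r + Real.log d) + Real.log t := by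
    rw [Real.log_mul (div_pos hl2 hrd).ne' ht.ne', Real.log_div hl2.ne' hrd.ne',
      Real.log_mul hr.ne' hd.ne', hlog2]
  have L3 : Real.log (2 / q) = Real.log 2 - Real.log q :=
    Real.log_div two_ne_zero hq.ne'
  have L4 : Real.log (d / l) = Real.log d - Real.log l := Real.log_div hd.ne' hl.ne'
  have L5 : Real.log (r / l) = Real.log r - Real.log l := Real.log_div hr.ne' hl.ne'
  have L6 : Real.log (2 * l ^ 2 / q) = Real.log 2 + 2 * Real.log l - Real.log q := by
    rw [Real.log_div h2l2.ne' hq.ne', Real.log_mul two_ne_zero hl2.ne', hlog2]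
  have hc1 : (l / d) ^ (2 * N) * (l ^ 2 / (r * d) * t) ^ (2 * s - N) * (2 / q) ^ (2 * s)
      * (d / l) ^ (N - 2 * s)
      = (r / l) ^ (N - 2 * s) * t ^ (2 * s - N) * (2 * l ^ 2 / q) ^ (2 * s)
        * d ^ (-(4 * s)) := by
    rw [Real.rpow_def_of_pos hld, Real.rpow_def_of_pos hb, Real.rpow_def_of_pos h2q,
      Real.rpow_def_of_pos hdl, Real.rpow_def_of_pos hrl, Real.rpow_def_of_pos ht,
      Real.rpow_def_of_pos h2lq, Real.rpow_def_of_pos hd,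
      ← Real.exp_add, ← Real.exp_add, ← Real.exp_add, ← Real.exp_add, ← Real.exp_add,
      ← Real.exp_add]
    congr 1
    rw [L1, L2, L3, L4, L5, L6]
    ring
  have hc2 : (l / d) ^ (2 * N) * (l ^ 2 / (r * d) * t) ^ (2 * s - N)
      * (2 / q) ^ ((N + 2 * s) / 2 - α * (N - 2 * s) / 2)
      * (d / l) ^ ((N - 2 * s) * α)
      = (r / l) ^ (N - 2 * s) * t ^ (2 * s - N)
        * (2 * l ^ 2 / q) ^ ((N + 2 * s) / 2 - α * (N - 2 * s) / 2)
        * d ^ (-(2 * ((N + 2 * s) / 2 - α * (N - 2 * s) / 2))) := by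
    rw [Real.rpow_def_of_pos hld, Real.rpow_def_of_pos hb, Real.rpow_def_of_pos h2q,
      Real.rpow_def_of_pos hdl, Real.rpow_def_of_pos hrl, Real.rpow_def_of_pos ht,
      Real.rpow_def_of_pos h2lq, Real.rpow_def_of_pos hd,
      ← Real.exp_add, ← Real.exp_add, ← Real.exp_add, ← Real.exp_add, ← Real.exp_add,
      ← Real.exp_add]
    congr 1
    rw [L1, L2, L3, L4, L5, L6]
    ring
  linear_combination (ε * K) * hc1 + (K ^ α) * hc2

/-- the integral identity satisfied by the Kelvin transform of a solution
    of (IE). -/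
theorem stmt_6 (n : ℕ) (s α ε γ σ : ℝ)
    (hs : 0 < 2 * s) (hns : 2 * s < (n : ℝ))
    (hα : 0 < α) (hα' : α ≤ ((n : ℝ) + 2 * s) / ((n : ℝ) - 2 * s))
    (hε : 0 ≤ ε) (hγ : 0 < γ)
    (hσ : σ = ((n : ℝ) + 2 * s) / 2 - α * ((n : ℝ) - 2 * s) / 2)
    (u : EuclideanSpace ℝ (Fin n) → ℝ) (hu : IsIESolution s σ α ε γ u)
    (x : EuclideanSpace ℝ (Fin n)) (l : ℝ) (hl : 0 < l)
    (ξ : EuclideanSpace ℝ (Fin n)) (hξ : ξ ≠ x) :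
    IntegrableOn
      (fun z => ‖ξ - z‖ ^ (2 * s - (n : ℝ)) *
        (ε * (2 * l ^ 2 / (1 + ‖sphereInversion x l z‖ ^ 2)) ^ (2 * s)
            * ‖z - x‖ ^ (-(4 * s)) * kelvin s u x l z
          + (2 * l ^ 2 / (1 + ‖sphereInversion x l z‖ ^ 2)) ^ σ
            * ‖z - x‖ ^ (-(2 * σ)) * kelvin s u x l z ^ α))
      {x}ᶜ ∧
    kelvin s u x l ξ
      = γ * ∫ z in ({x}ᶜ : Set (EuclideanSpace ℝ (Fin n))),
          ‖ξ - z‖ ^ (2 * s - (n : ℝ)) *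
            (ε * (2 * l ^ 2 / (1 + ‖sphereInversion x l z‖ ^ 2)) ^ (2 * s)
                * ‖z - x‖ ^ (-(4 * s)) * kelvin s u x l z
              + (2 * l ^ 2 / (1 + ‖sphereInversion x l z‖ ^ 2)) ^ σ
                * ‖z - x‖ ^ (-(2 * σ)) * kelvin s u x l z ^ α) := by
  classical
  obtain ⟨hucont, hupos, hsol⟩ := hu
  have hnpos : 0 < n := by
    by_contra h
    push_neg at h
    interval_cases n
    simp at hns
    linarith
  haveI : Nonempty (Fin n) := ⟨⟨0, hnpos⟩⟩
  haveI : Nontrivial (EuclideanSpace ℝ (Fin n)) := inferInstance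
  have hsi : sphereInversion x l = EuclideanGeometry.inversion x l := sphereInversion_eq x l
  let E := EuclideanSpace ℝ (Fin n)
  set η := sphereInversion x l ξ with hη
  obtain ⟨hint, hval⟩ := hsol η
  set g : E → ℝ := fun y => ‖η - y‖ ^ (2 * s - (n : ℝ)) * ieF s σ α ε u y with hg
  set G : E → ℝ := fun z => ‖ξ - z‖ ^ (2 * s - (n : ℝ)) *
        (ε * (2 * l ^ 2 / (1 + ‖sphereInversion x l z‖ ^ 2)) ^ (2 * s)
            * ‖z - x‖ ^ (-(4 * s)) * kelvin s u x l z
          + (2 * l ^ 2 / (1 + ‖sphereInversion x l z‖ ^ 2)) ^ σ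
            * ‖z - x‖ ^ (-(2 * σ)) * kelvin s u x l z ^ α) with hG
  set f' : EuclideanSpace ℝ (Fin n) → (EuclideanSpace ℝ (Fin n) →L[ℝ] EuclideanSpace ℝ (Fin n)) := fun z =>
    ((l / dist z x) ^ 2) • ((Submodule.reflection (ℝ ∙ (z - x))ᗮ :
      EuclideanSpace ℝ (Fin n) →L[ℝ] EuclideanSpace ℝ (Fin n))) with hf'def
  have hμ : (volume : Measure (EuclideanSpace ℝ (Fin n))).restrict {x}ᶜ = volume :=
    MeasureTheory.restrict_compl_singleton x
  have hmeas : MeasurableSet ({x}ᶜ : Set (EuclideanSpace ℝ (Fin n))) :=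
    (measurableSet_singleton x).compl
  have hf' : ∀ z ∈ ({x}ᶜ : Set (EuclideanSpace ℝ (Fin n))),
      HasFDerivWithinAt (sphereInversion x l) (f' z) {x}ᶜ z := by
    intro z hz
    rw [hsi]
    exact (EuclideanGeometry.hasFDerivAt_inversion (by simpa using hz)).hasFDerivWithinAt
  have hinj : Set.InjOn (sphereInversion x l) ({x}ᶜ : Set (EuclideanSpace ℝ (Fin n))) := by
    intro a _ b _ hab
    rw [hsi] at hab
    have h2 : EuclideanGeometry.inversion x l (EuclideanGeometry.inversion x l a)
        = EuclideanGeometry.inversion x l (EuclideanGeometry.inversion x l b) := by rw [hab]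
    rwa [EuclideanGeometry.inversion_inversion x hl.ne',
      EuclideanGeometry.inversion_inversion x hl.ne'] at h2
  have hne : ∀ z : EuclideanSpace ℝ (Fin n), z ≠ x → EuclideanGeometry.inversion x l z ≠ x := by
    intro z hz h
    have h1 := EuclideanGeometry.dist_inversion_center x z l
    rw [h, dist_self] at h1
    have h2 : 0 < l ^ 2 / dist z x := div_pos (by positivity) (dist_pos.2 hz)
    linarith [h1, h2]
  have himg : (sphereInversion x l) '' ({x}ᶜ : Set (EuclideanSpace ℝ (Fin n))) = {x}ᶜ := by
    rw [hsi]
    ext w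
    simp only [Set.mem_image, Set.mem_compl_iff, Set.mem_singleton_iff]
    constructor
    · rintro ⟨z, hz, rfl⟩
      exact hne z hz
    · intro hw
      exact ⟨EuclideanGeometry.inversion x l w, hne w hw,
        EuclideanGeometry.inversion_inversion x hl.ne' w⟩
  -- the key pointwise identity
  have hkey : ∀ z ∈ ({x}ᶜ : Set (EuclideanSpace ℝ (Fin n))),
      |(f' z).det| • g (sphereInversion x l z)
        = (‖ξ - x‖ / l) ^ ((n : ℝ) - 2 * s) * G z := by
    intro z hz
    have hzx : z ≠ x := by simpa using hz
    have hdz : (0:ℝ) < ‖z - x‖ := by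
      rw [norm_pos_iff]
      exact sub_ne_zero.2 hzx
    have hrx : (0:ℝ) < ‖ξ - x‖ := by
      rw [norm_pos_iff]
      exact sub_ne_zero.2 hξ
    have hq : (0:ℝ) < 1 + ‖sphereInversion x l z‖ ^ 2 := by positivity
    have hK : 0 < kelvin s u x l z := by
      rw [kelvin]
      exact mul_pos (Real.rpow_pos_of_pos (by positivity) _) (hupos _)
    have hdlpos : (0:ℝ) < ‖z - x‖ / l := by positivity
    have hcancel : (‖z - x‖ / l) ^ ((n:ℝ) - 2 * s) * (l / ‖z - x‖) ^ ((n:ℝ) - 2 * s)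
        = 1 := by
      rw [← Real.mul_rpow hdlpos.le (by positivity),
        show ‖z - x‖ / l * (l / ‖z - x‖) = 1 by field_simp, Real.one_rpow]
    have hufz : u (sphereInversion x l z)
        = (‖z - x‖ / l) ^ ((n:ℝ) - 2 * s) * kelvin s u x l z := by
      rw [kelvin, ← mul_assoc, hcancel, one_mul]
    have hnorm : ‖η - sphereInversion x l z‖
        = l ^ 2 / (‖ξ - x‖ * ‖z - x‖) * ‖ξ - z‖ := by
      rw [hη, hsi, ← dist_eq_norm,
        EuclideanGeometry.dist_inversion_inversion hξ hzx l, dist_eq_norm, dist_eq_norm,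
        dist_eq_norm]
    have hdet : |(f' z).det| = (l / ‖z - x‖) ^ (2 * (n:ℝ)) := by
      have h0 : (0:ℝ) ≤ (l / dist z x) ^ 2 := sq_nonneg _
      have hA : ∀ y : EuclideanSpace ℝ (Fin n),
          ((Submodule.reflection (ℝ ∙ (z - x))ᗮ :
            EuclideanSpace ℝ (Fin n) →L[ℝ] EuclideanSpace ℝ (Fin n)))
          (((Submodule.reflection (ℝ ∙ (z - x))ᗮ :
            EuclideanSpace ℝ (Fin n) →L[ℝ] EuclideanSpace ℝ (Fin n))) y) = y := fun y => by
        simp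
      rw [hf'def]
      rw [abs_det_smul_involutive _ h0 _ hA, finrank_euclideanSpace_fin, dist_eq_norm,
        show 2 * (n:ℝ) = ((2 * n : ℕ) : ℝ) by push_cast; ring, Real.rpow_natCast, pow_mul]
    rw [smul_eq_mul]
    simp only [hg, hG, ieF]
    rw [hdet, hnorm, hufz,
      Real.mul_rpow (Real.rpow_pos_of_pos hdlpos _).le hK.le,
      ← Real.rpow_mul hdlpos.le]
    exact keyCalc s σ α ε (n:ℝ) l ‖z - x‖ ‖ξ - x‖ (1 + ‖sphereInversion x l z‖ ^ 2)
      ‖ξ - z‖ (kelvin s u x l z) hl hdz hrx hq (norm_nonneg _) hK (by linarith) hσ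
  -- assembly
  have hgone : IntegrableOn g ({x}ᶜ : Set (EuclideanSpace ℝ (Fin n))) := by
    rw [IntegrableOn, hμ]
    exact hint
  have hiff := integrableOn_image_iff_integrableOn_abs_det_fderiv_smul volume hmeas hf' hinj g
  rw [himg] at hiff
  have hI2 : IntegrableOn (fun z => |(f' z).det| • g (sphereInversion x l z))
      ({x}ᶜ : Set (EuclideanSpace ℝ (Fin n))) volume := hiff.1 hgone
  have hcpos : 0 < (‖ξ - x‖ / l) ^ ((n : ℝ) - 2 * s) := by
    have hrx : (0:ℝ) < ‖ξ - x‖ := by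
      rw [norm_pos_iff]; exact sub_ne_zero.2 hξ
    exact Real.rpow_pos_of_pos (by positivity) _
  have hIG : IntegrableOn G ({x}ᶜ : Set (EuclideanSpace ℝ (Fin n))) volume := by
    have h3 := hI2.const_mul ((‖ξ - x‖ / l) ^ ((n : ℝ) - 2 * s))⁻¹
    refine MeasureTheory.IntegrableOn.congr_fun h3 ?_ hmeas
    intro z hz
    show ((‖ξ - x‖ / l) ^ ((n : ℝ) - 2 * s))⁻¹ * (|(f' z).det| • g (sphereInversion x l z))
      = G z
    rw [hkey z hz, ← mul_assoc, inv_mul_cancel₀ hcpos.ne', one_mul]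
  refine ⟨hIG, ?_⟩
  have hii := integral_image_eq_integral_abs_det_fderiv_smul volume hmeas hf' hinj g
  rw [himg] at hii
  have hval2 : ∫ z in ({x}ᶜ : Set (EuclideanSpace ℝ (Fin n))),
        |(f' z).det| • g (sphereInversion x l z)
      = (‖ξ - x‖ / l) ^ ((n : ℝ) - 2 * s)
        * ∫ z in ({x}ᶜ : Set (EuclideanSpace ℝ (Fin n))), G z := by
    rw [setIntegral_congr_fun hmeas hkey]
    exact MeasureTheory.integral_const_mul _ _
  have hfull : ∫ y, g y = ∫ y in ({x}ᶜ : Set (EuclideanSpace ℝ (Fin n))), g y := by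
    rw [hμ]
  have hux : u η = γ * ((‖ξ - x‖ / l) ^ ((n : ℝ) - 2 * s)
      * ∫ z in ({x}ᶜ : Set (EuclideanSpace ℝ (Fin n))), G z) := by
    rw [hval]
    congr 1
    rw [hfull, hii, hval2]
  show kelvin s u x l ξ = γ * ∫ z in ({x}ᶜ : Set (EuclideanSpace ℝ (Fin n))), G z
  rw [kelvin, ← hη, hux]
  have hcc : (l / ‖ξ - x‖) ^ ((n : ℝ) - 2 * s) * (‖ξ - x‖ / l) ^ ((n : ℝ) - 2 * s) = 1 := by
    have hrx : (0:ℝ) < ‖ξ - x‖ := by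
      rw [norm_pos_iff]; exact sub_ne_zero.2 hξ
    rw [← Real.mul_rpow (by positivity) (by positivity),
      show l / ‖ξ - x‖ * (‖ξ - x‖ / l) = 1 by field_simp, Real.one_rpow]
  linear_combination (γ * ∫ z in ({x}ᶜ : Set (EuclideanSpace ℝ (Fin n))), G z) * hcc
end

section
/- Let u be a positive solution of the integral equation (IE) which is continuously differentiable on ℝⁿ, such that sup_{ℝⁿ} |∇(log u)| < ∞ and liminf_{|y|→∞} |y|^{n−2s} u(y) > 0. Then for every x ∈ ℝⁿ there exists λ₀ > 0 such that for every λ with 0 < λ < λ₀ and every y ∈ ℝⁿ with |y − x| ≥ λ one has u_{x,λ}(y) ≤ u(y). -/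
open MeasureTheory Filter

section Aux
variable {n : ℕ}

lemma log_lipschitz_bound {u : EuclideanSpace ℝ (Fin n) → ℝ} {M : ℝ}
    (hu1 : ContDiff ℝ 1 u) (hpos : ∀ y, 0 < u y)
    (hM : ∀ y, ‖gradient (fun w => Real.log (u w)) y‖ ≤ M) :
    ∀ a b : EuclideanSpace ℝ (Fin n), u a ≤ u b * Real.exp (M * ‖a - b‖) := by
  intro a b
  set f : EuclideanSpace ℝ (Fin n) → ℝ := fun w => Real.log (u w) with hf
  have hdiff : ∀ y : EuclideanSpace ℝ (Fin n), DifferentiableAt ℝ f y := fun y =>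
    ((hu1.differentiable one_ne_zero) y).log (hpos y).ne'
  have hfd : ∀ y : EuclideanSpace ℝ (Fin n), ‖fderiv ℝ f y‖ ≤ M := by
    intro y
    have h1 : ‖gradient f y‖ = ‖fderiv ℝ f y‖ := by
      rw [gradient]
      exact LinearIsometryEquiv.norm_map _ _
    rw [← h1]; exact hM y
  have key : ‖f a - f b‖ ≤ M * ‖a - b‖ :=
    Convex.norm_image_sub_le_of_norm_fderiv_le (fun y _ => hdiff y) (fun y _ => hfd y)
      convex_univ (Set.mem_univ b) (Set.mem_univ a)
  have h2 : f a - f b ≤ M * ‖a - b‖ := (le_abs_self _).trans (by rwa [Real.norm_eq_abs] at key)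
  have h3 : u a = Real.exp (f a) := (Real.exp_log (hpos a)).symm
  have h4 : u b = Real.exp (f b) := (Real.exp_log (hpos b)).symm
  rw [h3, h4, ← Real.exp_add, Real.exp_le_exp]
  linarith

lemma key_log_ineq {k M t ρ : ℝ} (hk : 0 < k) (hM : 0 < M) (ht : 0 < t)
    (htρ : t ≤ ρ) (hρ : ρ ≤ k / M) :
    M * (ρ - t) ≤ k * (Real.log ρ - Real.log t) := by
  have hρ0 : 0 < ρ := lt_of_lt_of_le ht htρ
  have h1 : Real.log (t / ρ) ≤ t / ρ - 1 := Real.log_le_sub_one_of_pos (by positivity)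
  rw [Real.log_div ht.ne' hρ0.ne'] at h1
  have h2 : (ρ - t) / ρ ≤ Real.log ρ - Real.log t := by
    have : (ρ - t) / ρ = 1 - t / ρ := by field_simp
    rw [this]; linarith
  have hMρ : M * ρ ≤ k := by
    have := (le_div_iff₀ hM).mp hρ
    linarith
  have h3 : 0 ≤ (ρ - t) / ρ := div_nonneg (by linarith) hρ0.le
  calc M * (ρ - t) = (M * ρ) * ((ρ - t) / ρ) := by field_simp
    _ ≤ k * ((ρ - t) / ρ) := mul_le_mul_of_nonneg_right hMρ h3
    _ ≤ k * (Real.log ρ - Real.log t) := mul_le_mul_of_nonneg_left h2 hk.le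

end Aux

set_option maxHeartbeats 1000000

/-- the method of moving spheres can start: for every center `x` there is a
    threshold `λ₀ > 0` below which `u_{x,λ} ≤ u` outside the ball. -/
theorem stmt_8 (n : ℕ) (s α ε γ σ : ℝ)
    (hs : 0 < 2 * s) (hns : 2 * s < (n : ℝ))
    (hα : 0 < α) (hα' : α ≤ ((n : ℝ) + 2 * s) / ((n : ℝ) - 2 * s))
    (hε : 0 ≤ ε) (hγ : 0 < γ)
    (hσ : σ = ((n : ℝ) + 2 * s) / 2 - α * ((n : ℝ) - 2 * s) / 2)
    (u : EuclideanSpace ℝ (Fin n) → ℝ) (hu : IsIESolution s σ α ε γ u)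
    (hu1 : ContDiff ℝ 1 u)
    (hgrad : ∃ M : ℝ, ∀ y, ‖gradient (fun w => Real.log (u w)) y‖ ≤ M)
    (hinf : ∃ c : ℝ, 0 < c ∧
      ∀ᶠ y in Bornology.cobounded (EuclideanSpace ℝ (Fin n)), c ≤ ‖y‖ ^ ((n : ℝ) - 2 * s) * u y) :
    ∀ x : EuclideanSpace ℝ (Fin n), ∃ l₀ : ℝ, 0 < l₀ ∧
      ∀ l : ℝ, 0 < l → l < l₀ →
        ∀ y : EuclideanSpace ℝ (Fin n), l ≤ ‖y - x‖ → kelvin s u x l y ≤ u y := by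
  obtain ⟨hcont, hpos, -⟩ := hu
  obtain ⟨M₀, hM₀⟩ := hgrad
  obtain ⟨c, hc, hev⟩ := hinf
  intro x
  have hn : 0 < n := by
    rcases Nat.eq_zero_or_pos n with h | h
    · exfalso; rw [h] at hns; push_cast at hns; linarith
    · exact h
  set κ : ℝ := (n : ℝ) - 2 * s with hκdef
  have hκ : 0 < κ := by rw [hκdef]; linarith
  set M : ℝ := max M₀ 1 with hMdef
  have hM1 : 0 < M := lt_of_lt_of_le one_pos (le_max_right _ _)
  have hMb : ∀ y, ‖gradient (fun w => Real.log (u w)) y‖ ≤ M := fun y =>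
    (hM₀ y).trans (le_max_left _ _)
  have hulip := log_lipschitz_bound hu1 hpos hMb
  set k : ℝ := κ / 2 with hkdef
  have hk : 0 < k := by positivity
  set r₀ : ℝ := k / M with hr₀def
  have hr₀ : 0 < r₀ := by positivity
  -- far-field lower bound
  obtain ⟨R, -, hR⟩ := (Filter.hasBasis_cobounded_norm.eventually_iff).mp hev
  set R₁ : ℝ := max R (2 * ‖x‖) + 1 with hR₁def
  have hfar : ∀ y : EuclideanSpace ℝ (Fin n), R₁ ≤ ‖y‖ → c * 2⁻¹ ^ κ ≤ ‖y - x‖ ^ κ * u y := by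
    intro y hy
    have hyR : R ≤ ‖y‖ := le_trans (by simp [hR₁def]; linarith [le_max_left R (2 * ‖x‖)]) hy
    have h1 : c ≤ ‖y‖ ^ κ * u y := hR hyR
    have hx2 : 2 * ‖x‖ ≤ ‖y‖ :=
      le_trans (by simp [hR₁def]; linarith [le_max_right R (2 * ‖x‖)]) hy
    have hyx : ‖y‖ / 2 ≤ ‖y - x‖ := by
      have := norm_sub_norm_le y x
      linarith
    have hmono : (‖y‖ / 2) ^ κ ≤ ‖y - x‖ ^ κ := Real.rpow_le_rpow (by positivity) hyx hκ.le
    have heq : (‖y‖ / 2) ^ κ = ‖y‖ ^ κ * 2⁻¹ ^ κ := by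
      rw [div_eq_mul_inv, Real.mul_rpow (norm_nonneg y) (by norm_num)]
    calc c * 2⁻¹ ^ κ ≤ (‖y‖ ^ κ * u y) * 2⁻¹ ^ κ :=
          mul_le_mul_of_nonneg_right h1 (by positivity)
      _ = (‖y‖ ^ κ * 2⁻¹ ^ κ) * u y := by ring
      _ ≤ ‖y - x‖ ^ κ * u y := by
          rw [← heq]; exact mul_le_mul_of_nonneg_right hmono (hpos y).le
  -- compact annulus minimum
  set R₂ : ℝ := R₁ + ‖x‖ + r₀ with hR₂def
  set K : Set (EuclideanSpace ℝ (Fin n)) := Metric.closedBall x R₂ \ Metric.ball x r₀ with hKdef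
  have hKc : IsCompact K := (isCompact_closedBall x R₂).diff Metric.isOpen_ball
  have hR₁pos : (0:ℝ) < R₁ := by
    have : (0:ℝ) ≤ max R (2 * ‖x‖) := le_max_of_le_right (by positivity)
    rw [hR₁def]; linarith
  have hKne : K.Nonempty := by
    have hnorm : ‖(x + r₀ • EuclideanSpace.single ⟨0, hn⟩ (1:ℝ)) - x‖ = r₀ := by
      rw [add_sub_cancel_left, norm_smul, EuclideanSpace.norm_single]
      simp [abs_of_pos hr₀]
    refine ⟨x + r₀ • EuclideanSpace.single ⟨0, hn⟩ (1:ℝ), ?_, ?_⟩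
    · rw [Metric.mem_closedBall, dist_eq_norm, hnorm, hR₂def]
      linarith [norm_nonneg x]
    · rw [Metric.mem_ball, dist_eq_norm, hnorm]
      simp
  obtain ⟨z, hzK, hz⟩ := hKc.exists_isMinOn hKne hcont.continuousOn
  rw [isMinOn_iff] at hz
  set m : ℝ := u z with hmdef
  have hm : 0 < m := hpos z
  set c' : ℝ := min (c * 2⁻¹ ^ κ) (m * r₀ ^ κ) with hc'def
  have hc' : 0 < c' := lt_min (by positivity) (by positivity)
  have hlow : ∀ y : EuclideanSpace ℝ (Fin n), r₀ ≤ ‖y - x‖ → c' ≤ ‖y - x‖ ^ κ * u y := by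
    intro y hy
    rcases le_or_gt R₁ ‖y‖ with h | h
    · exact (min_le_left _ _).trans (hfar y h)
    · have hyK : y ∈ K := by
        constructor
        · rw [Metric.mem_closedBall, dist_eq_norm]
          calc ‖y - x‖ ≤ ‖y‖ + ‖x‖ := norm_sub_le _ _
            _ ≤ R₂ := by rw [hR₂def]; linarith
        · rw [Metric.mem_ball, dist_eq_norm]; push_neg; exact hy
      have h1 : m ≤ u y := hz y hyK
      have h2 : r₀ ^ κ ≤ ‖y - x‖ ^ κ := Real.rpow_le_rpow hr₀.le hy hκ.le
      calc c' ≤ m * r₀ ^ κ := min_le_right _ _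
        _ ≤ u y * ‖y - x‖ ^ κ := mul_le_mul h1 h2 (by positivity) (hpos y).le
        _ = ‖y - x‖ ^ κ * u y := mul_comm _ _
  -- maximum of u on the small ball
  obtain ⟨w, hwB, hw⟩ := (isCompact_closedBall x r₀).exists_isMaxOn
    ⟨x, Metric.mem_closedBall_self hr₀.le⟩ hcont.continuousOn
  rw [isMaxOn_iff] at hw
  set C : ℝ := u w with hCdef
  have hC : 0 < C := hpos w
  refine ⟨min r₀ ((c' / C) ^ κ⁻¹), lt_min hr₀ (by positivity), ?_⟩
  intro l hl hll₀ y hly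
  set ρ : ℝ := ‖y - x‖ with hρdef
  have hρ0 : 0 < ρ := lt_of_lt_of_le hl hly
  have hlr₀ : l < r₀ := lt_of_lt_of_le hll₀ (min_le_left _ _)
  -- the inversion point
  set p : EuclideanSpace ℝ (Fin n) := sphereInversion x l y with hpdef
  have hpsub : p - x = (l ^ 2 / ρ ^ 2) • (y - x) := by
    rw [hpdef, sphereInversion, add_sub_cancel_left, hρdef]
  have hpnorm : ‖p - x‖ = l ^ 2 / ρ := by
    rw [hpsub, norm_smul, Real.norm_eq_abs, abs_of_pos (by positivity), ← hρdef]
    field_simp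
  have htl : l ^ 2 / ρ ≤ l := by
    rw [div_le_iff₀ hρ0, sq]
    exact mul_le_mul_of_nonneg_left hly hl.le
  have ht0 : 0 < l ^ 2 / ρ := by positivity
  -- unfold kelvin
  have hkel : kelvin s u x l y = (l / ρ) ^ κ * u p := by
    simp only [kelvin]
    rfl
  rw [hkel]
  have hdiv : (l / ρ) ^ κ = l ^ κ / ρ ^ κ := Real.div_rpow hl.le (norm_nonneg (y - x)) κ
  rw [hdiv, div_mul_eq_mul_div, div_le_iff₀ (Real.rpow_pos_of_pos hρ0 κ)]
  -- goal : l ^ κ * u p ≤ u y * ρ ^ κ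
  rcases le_or_gt ρ r₀ with hcase | hcase
  · -- region 1
    set t : ℝ := l ^ 2 / ρ with htdef
    have htρ : t ≤ ρ := le_trans htl hly
    have hpy : ‖p - y‖ = ρ - t := by
      have h1 : p - y = (l ^ 2 / ρ ^ 2 - 1) • (y - x) := by
        have : p - y = (p - x) - (y - x) := by abel
        rw [this, hpsub, sub_smul, one_smul]
      rw [h1, norm_smul, Real.norm_eq_abs, ← hρdef]
      have hle1 : l ^ 2 / ρ ^ 2 ≤ 1 := by
        rw [div_le_one (pow_pos hρ0 2)]
        exact pow_le_pow_left₀ hl.le hly 2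
      rw [abs_of_nonpos (by linarith), htdef]
      field_simp
      ring
    have hup : u p ≤ u y * Real.exp (M * (ρ - t)) := by
      have := hulip p y
      rwa [hpy] at this
    have hexp : l ^ κ * Real.exp (M * (ρ - t)) ≤ ρ ^ κ := by
      rw [Real.rpow_def_of_pos hl, Real.rpow_def_of_pos hρ0, ← Real.exp_add, Real.exp_le_exp]
      have hlogt : Real.log t = 2 * Real.log l - Real.log ρ := by
        rw [htdef, Real.log_div (by positivity) hρ0.ne', Real.log_pow]
        push_cast; ring
      have hkey : M * (ρ - t) ≤ k * (Real.log ρ - Real.log t) :=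
        key_log_ineq hk hM1 ht0 htρ hcase
      have hκ2k : κ = 2 * k := by rw [hkdef]; ring
      have h5 : k * Real.log t = k * (2 * Real.log l) - k * Real.log ρ := by
        rw [hlogt]; ring
      rw [hκ2k]
      linarith [hkey, h5, mul_sub k (Real.log ρ) (Real.log t)]
    calc l ^ κ * u p ≤ l ^ κ * (u y * Real.exp (M * (ρ - t))) :=
          mul_le_mul_of_nonneg_left hup (Real.rpow_pos_of_pos hl κ).le
      _ = u y * (l ^ κ * Real.exp (M * (ρ - t))) := by ring
      _ ≤ u y * ρ ^ κ := mul_le_mul_of_nonneg_left hexp (hpos y).le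
  · -- region 2
    have hpB : p ∈ Metric.closedBall x r₀ := by
      rw [Metric.mem_closedBall, dist_eq_norm, hpnorm]
      linarith
    have hup : u p ≤ C := hw p hpB
    have hlκ : l ^ κ ≤ c' / C := by
      have h1 : l ≤ (c' / C) ^ κ⁻¹ := le_of_lt (lt_of_lt_of_le hll₀ (min_le_right _ _))
      calc l ^ κ ≤ ((c' / C) ^ κ⁻¹) ^ κ := Real.rpow_le_rpow hl.le h1 hκ.le
        _ = c' / C := Real.rpow_inv_rpow (by positivity) hκ.ne'
    have h2 : c' ≤ ρ ^ κ * u y := hlow y hcase.le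
    calc l ^ κ * u p ≤ (c' / C) * C := by
          apply mul_le_mul hlκ hup (hpos p).le (div_nonneg hc'.le hC.le)
      _ = c' := by field_simp
      _ ≤ ρ ^ κ * u y := h2
      _ = u y * ρ ^ κ := mul_comm _ _
end

section
/- Let n be an integer and s a real number with n > 2s > 0, and let u : ℝⁿ → ℝ be continuous and satisfy: for every x ∈ ℝⁿ \ {0}, every λ with 0 < λ < |x|, and every y ∈ ℝⁿ with |y − x| ≥ λ, one has (λ/|y − x|)^{n−2s} u(x + λ²(y − x)/|y − x|²) ≤ u(y). Then u is radially symmetric about the origin, i.e. u(y) = u(z) whenever |y| = |z|. -/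
open Filter Topology

/-- if a continuous `u` satisfies the moving-spheres comparison
    `u_{x,λ}(y) ≤ u(y)` for all `x ≠ 0`, `0 < λ < |x|`, `|y − x| ≥ λ`, then `u` is
    radially symmetric about the origin. -/
theorem stmt_10 (n : ℕ) (s : ℝ) (hs : 0 < 2 * s) (hns : 2 * s < (n : ℝ))
    (u : EuclideanSpace ℝ (Fin n) → ℝ) (hu : Continuous u)
    (h : ∀ x : EuclideanSpace ℝ (Fin n), x ≠ 0 →
      ∀ l : ℝ, 0 < l → l < ‖x‖ →
        ∀ y : EuclideanSpace ℝ (Fin n), l ≤ ‖y - x‖ →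
          (l / ‖y - x‖) ^ ((n : ℝ) - 2 * s)
              * u (x + (l ^ 2 / ‖y - x‖ ^ 2) • (y - x)) ≤ u y) :
    ∀ y z : EuclideanSpace ℝ (Fin n), ‖y‖ = ‖z‖ → u y = u z := by
  suffices H : ∀ y z : EuclideanSpace ℝ (Fin n), ‖y‖ = ‖z‖ → u y ≤ u z by
    intro y z hyz
    exact le_antisymm (H y z hyz) (H z y hyz.symm)
  intro y z hyz
  rcases eq_or_ne y z with rfl | hne
  · exact le_rfl
  have hr : 0 < ‖z‖ := by
    rcases (norm_nonneg z).eq_or_lt with h0 | h0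
    · exact absurd ((norm_eq_zero.mp (hyz.trans h0.symm)).trans
        (norm_eq_zero.mp h0.symm).symm) hne
    · exact h0
  set d : ℝ := ‖y - z‖ with hd
  have hd0 : 0 < d := norm_sub_pos_iff.mpr hne
  set e : EuclideanSpace ℝ (Fin n) := d⁻¹ • (y - z) with he
  have hee : ‖e‖ = 1 := by
    rw [he, norm_smul, Real.norm_eq_abs, abs_inv, abs_of_pos hd0, ← hd,
      inv_mul_cancel₀ hd0.ne']
  have hde : d • e = y - z := by
    rw [he, smul_smul, mul_inv_cancel₀ hd0.ne', one_smul]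
  have hze : (inner ℝ z e : ℝ) = -(d / 2) := by
    have h1 : d ^ 2 = ‖z‖ ^ 2 - 2 * (inner ℝ y z : ℝ) + ‖z‖ ^ 2 := by
      rw [hd, @norm_sub_sq_real, hyz]
    have h2 : (inner ℝ z (y - z) : ℝ) = (inner ℝ z y : ℝ) - ‖z‖ ^ 2 := by
      rw [inner_sub_right, real_inner_self_eq_norm_sq]
    have h4 : (inner ℝ z y : ℝ) = ‖z‖ ^ 2 - d ^ 2 / 2 := by
      rw [real_inner_comm]; linarith
    rw [he, real_inner_smul_right, h2, h4]
    field_simp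
    ring
  set c : ℝ := (n : ℝ) - 2 * s with hc
  have hc0 : 0 < c := by rw [hc]; linarith
  have key : ∀ T : ℝ, d < T → Real.sqrt (1 - d / T) ^ c * u y ≤ u z := by
    intro T hT
    have hT0 : 0 < T := hd0.trans hT
    have hTd : 0 < T * (T - d) := mul_pos hT0 (by linarith)
    set x : EuclideanSpace ℝ (Fin n) := z + T • e with hx
    set l : ℝ := Real.sqrt (T * (T - d)) with hl
    have hl0 : 0 < l := Real.sqrt_pos.mpr hTd
    have hl2 : l ^ 2 = T * (T - d) := Real.sq_sqrt hTd.le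
    have hzx : z - x = -(T • e) := by rw [hx]; abel
    have hzxn : ‖z - x‖ = T := by
      rw [hzx, norm_neg, norm_smul, Real.norm_eq_abs, abs_of_pos hT0, hee, mul_one]
    have hxn : ‖x‖ = Real.sqrt (T * (T - d) + ‖z‖ ^ 2) := by
      have hxsq : ‖x‖ ^ 2 = T * (T - d) + ‖z‖ ^ 2 := by
        rw [hx, @norm_add_sq_real, real_inner_smul_right, hze, norm_smul,
          Real.norm_eq_abs, abs_of_pos hT0, hee]
        ring
      rw [← hxsq, Real.sqrt_sq (norm_nonneg x)]
    have hlx : l < ‖x‖ := by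
      rw [hl, hxn]
      exact Real.sqrt_lt_sqrt hTd.le (by nlinarith)
    have hx0 : x ≠ 0 := by
      intro h0
      rw [h0, norm_zero] at hlx
      exact absurd hlx (not_lt.mpr hl0.le)
    have hlz : l ≤ ‖z - x‖ := by
      rw [hl, hzxn]
      calc Real.sqrt (T * (T - d)) ≤ Real.sqrt (T ^ 2) :=
            Real.sqrt_le_sqrt (by nlinarith)
        _ = T := Real.sqrt_sq hT0.le
    have hpt : x + (l ^ 2 / ‖z - x‖ ^ 2) • (z - x) = y := by
      have hcoef : l ^ 2 / T ^ 2 * T = T - d := by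
        rw [hl2]; field_simp
      have hsm : (l ^ 2 / ‖z - x‖ ^ 2) • (z - x) = -((T - d) • e) := by
        rw [hzxn, hzx, smul_neg, smul_smul, hcoef]
      rw [hsm, hx]
      have : z + T • e + -((T - d) • e) = z + d • e := by module
      rw [this, hde]
      abel
    have hkey := h x hx0 l hl0 hlx z hlz
    rw [hpt, hzxn] at hkey
    have hfrac : l / T = Real.sqrt (1 - d / T) := by
      have h1 : (1 : ℝ) - d / T = T * (T - d) / T ^ 2 := by field_simp
      rw [h1, Real.sqrt_div hTd.le, Real.sqrt_sq hT0.le, hl]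
    rw [hfrac] at hkey
    exact hkey
  have hlim : Tendsto (fun T : ℝ => Real.sqrt (1 - d / T) ^ c * u y) atTop (𝓝 (u y)) := by
    have h1 : Tendsto (fun T : ℝ => 1 - d / T) atTop (𝓝 1) := by
      have h0 : Tendsto (fun T : ℝ => d / T) atTop (𝓝 0) :=
        Tendsto.div_atTop tendsto_const_nhds tendsto_id
      simpa using (tendsto_const_nhds (x := (1 : ℝ))).sub h0
    have h2 : Tendsto (fun T : ℝ => Real.sqrt (1 - d / T)) atTop (𝓝 1) := by
      have := (Real.continuous_sqrt.tendsto 1).comp h1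
      simpa [Function.comp_def] using this
    have h3 : Tendsto (fun T : ℝ => Real.sqrt (1 - d / T) ^ c) atTop (𝓝 1) := by
      have := h2.rpow_const (p := c) (Or.inl one_ne_zero)
      simpa using this
    simpa using h3.mul_const (u y)
  exact le_of_tendsto hlim (eventually_atTop.mpr ⟨d + 1, fun T hT => key T (by linarith)⟩)
end

section
/- Let n be an integer and s a real number with n > 2s > 0, and let F : ℝⁿ → ℝ be measurable with |F(y)| ≤ C (1 + |y|²)^{−(n+2s)/2} for all y ∈ ℝⁿ, for some constant C > 0. Then there exists a constant C′ > 0 such that for every x ∈ ℝⁿ with |x| ≥ 2 one has ∫_{ℝⁿ} |x − y|^{2s−n} |F(y)| dy ≤ C′ |x|^{2s−n}. -/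
open MeasureTheory Metric Set ENNReal



-- scaling lemma
lemma aux_scale (n : ℕ) (g : EuclideanSpace ℝ (Fin n) → ℝ≥0∞) (hg : Measurable g)
    {ρ : ℝ} (hρ : 0 < ρ) :
    ∫⁻ z, g z = ENNReal.ofReal (ρ ^ (n : ℝ)) * ∫⁻ w, g (ρ • w) := by
  have h1 : ∫⁻ w, g (ρ • w) = ∫⁻ z, g z ∂(Measure.map (ρ • ·) (volume : Measure (EuclideanSpace ℝ (Fin n)))) :=
    (lintegral_map hg (measurable_const_smul ρ)).symm
  rw [Measure.map_addHaar_smul volume hρ.ne'] at h1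
  rw [lintegral_smul_measure] at h1
  rw [h1, finrank_euclideanSpace_fin]
  rw [smul_eq_mul, ← mul_assoc, ← ENNReal.ofReal_mul (by positivity)]
  have hpow : (ρ : ℝ) ^ (n : ℝ) = ρ ^ (n : ℕ) := Real.rpow_natCast ρ n
  rw [hpow, abs_of_pos (by positivity), mul_inv_cancel₀ (by positivity), ENNReal.ofReal_one, one_mul]

-- kernel scaling over a set
lemma aux_set_scale (n : ℕ) (a : ℝ) {ρ : ℝ} (hρ : 0 < ρ)
    (S : Set (EuclideanSpace ℝ (Fin n))) (hS : MeasurableSet S) :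
    ∫⁻ z in S, ENNReal.ofReal (‖z‖ ^ a)
      = ENNReal.ofReal (ρ ^ (n : ℝ) * ρ ^ a) *
        ∫⁻ w in (fun w => ρ • w) ⁻¹' S, ENNReal.ofReal (‖w‖ ^ a) := by
  have hmf : Measurable (fun z : EuclideanSpace ℝ (Fin n) => ENNReal.ofReal (‖z‖ ^ a)) :=
    by fun_prop
  have hmS : MeasurableSet ((fun w : EuclideanSpace ℝ (Fin n) => ρ • w) ⁻¹' S) :=
    hS.preimage (measurable_const_smul ρ)
  rw [← lintegral_indicator hS, ← lintegral_indicator hmS]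
  rw [aux_scale n _ (hmf.indicator hS) hρ]
  rw [ENNReal.ofReal_mul (by positivity), mul_assoc]
  congr 1
  rw [← lintegral_const_mul' _ _ ENNReal.ofReal_ne_top]
  apply lintegral_congr
  intro w
  by_cases hw : ρ • w ∈ S
  · have hw' : w ∈ (fun w : EuclideanSpace ℝ (Fin n) => ρ • w) ⁻¹' S := hw
    rw [Set.indicator_of_mem hw, Set.indicator_of_mem hw']
    rw [norm_smul, Real.norm_eq_abs, abs_of_pos hρ,
      Real.mul_rpow hρ.le (norm_nonneg _), ENNReal.ofReal_mul (by positivity)]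
  · have hw' : w ∉ (fun w : EuclideanSpace ℝ (Fin n) => ρ • w) ⁻¹' S := hw
    rw [Set.indicator_of_notMem hw, Set.indicator_of_notMem hw', mul_zero]

-- K: integral of ‖z‖^(-r) outside unit ball, n < r
lemma aux_K (n : ℕ) {r : ℝ} (hr : (n : ℝ) < r) :
    ∫⁻ z in (closedBall (0 : EuclideanSpace ℝ (Fin n)) 1)ᶜ,
      ENNReal.ofReal (‖z‖ ^ (-r)) < ∞ := by
  have hr0 : 0 < r := lt_of_le_of_lt (Nat.cast_nonneg n) hr
  have hfin : (∫⁻ x : EuclideanSpace ℝ (Fin n), ENNReal.ofReal ((1 + ‖x‖) ^ (-r)) ∂volume) < ∞ := by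
    apply finite_integral_one_add_norm
    rwa [finrank_euclideanSpace_fin]
  have hbd : ∀ z : EuclideanSpace ℝ (Fin n), z ∈ (closedBall (0 : EuclideanSpace ℝ (Fin n)) 1)ᶜ →
      ENNReal.ofReal (‖z‖ ^ (-r)) ≤ ENNReal.ofReal ((2:ℝ) ^ r * (1 + ‖z‖) ^ (-r)) := by
    intro z hz
    have h1 : 1 < ‖z‖ := by
      simpa [mem_closedBall, dist_zero_right] using hz
    apply ENNReal.ofReal_le_ofReal
    have hhalf : 0 < (1 + ‖z‖) / 2 := by linarith
    have hle : (1 + ‖z‖) / 2 ≤ ‖z‖ := by linarith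
    calc ‖z‖ ^ (-r) ≤ ((1 + ‖z‖) / 2) ^ (-r) :=
          Real.rpow_le_rpow_of_nonpos hhalf hle (by linarith)
      _ = (2:ℝ) ^ r * (1 + ‖z‖) ^ (-r) := by
          rw [Real.div_rpow (by linarith) (by norm_num), Real.rpow_neg (by norm_num : (0:ℝ) ≤ 2)]
          field_simp
  calc ∫⁻ z in (closedBall (0 : EuclideanSpace ℝ (Fin n)) 1)ᶜ, ENNReal.ofReal (‖z‖ ^ (-r))
      ≤ ∫⁻ z in (closedBall (0 : EuclideanSpace ℝ (Fin n)) 1)ᶜ,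
          ENNReal.ofReal ((2:ℝ) ^ r * (1 + ‖z‖) ^ (-r)) :=
        setLIntegral_mono (by fun_prop) hbd
    _ ≤ ∫⁻ z, ENNReal.ofReal ((2:ℝ) ^ r * (1 + ‖z‖) ^ (-r)) := setLIntegral_le_lintegral _ _
    _ = ENNReal.ofReal ((2:ℝ) ^ r) * ∫⁻ z, ENNReal.ofReal ((1 + ‖z‖) ^ (-r)) := by
        simp_rw [ENNReal.ofReal_mul (by positivity : (0:ℝ) ≤ (2:ℝ) ^ r)]
        exact lintegral_const_mul' _ _ ENNReal.ofReal_ne_top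
    _ < ∞ := ENNReal.mul_lt_top ENNReal.ofReal_lt_top hfin

-- I: integral of (1+‖y‖²)^(-r/2), n < r
lemma aux_I (n : ℕ) {r : ℝ} (hr : (n : ℝ) < r) :
    ∫⁻ y : EuclideanSpace ℝ (Fin n), ENNReal.ofReal ((1 + ‖y‖ ^ 2) ^ (-r / 2)) < ∞ := by
  have h : Integrable (fun y : EuclideanSpace ℝ (Fin n) => ((1:ℝ) + ‖y‖ ^ 2) ^ (-r / 2)) volume := by
    apply integrable_rpow_neg_one_add_norm_sq
    rwa [finrank_euclideanSpace_fin]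
  exact h.lintegral_lt_top

-- J: integral of ‖z‖^a on unit ball, -n < a < 0
lemma aux_J (n : ℕ) {a : ℝ} (han : -(n:ℝ) < a) (ha0 : a < 0) :
    ∫⁻ z in closedBall (0 : EuclideanSpace ℝ (Fin n)) 1,
      ENNReal.ofReal (‖z‖ ^ a) < ∞ := by
  set c : ℝ := 2⁻¹ with hc
  have hc0 : (0:ℝ) < c := by norm_num
  have hc1 : c < 1 := by norm_num
  set S : ℕ → Set (EuclideanSpace ℝ (Fin n)) :=
    fun k => closedBall 0 (c ^ k) \ closedBall 0 (c ^ (k+1)) with hSdef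
  have hcover : closedBall (0 : EuclideanSpace ℝ (Fin n)) 1 ⊆ {0} ∪ ⋃ k, S k := by
    intro w hw
    rcases eq_or_ne w 0 with h0 | h0
    · exact Or.inl h0
    · right
      have hw0 : 0 < ‖w‖ := norm_pos_iff.mpr h0
      have hw1 : ‖w‖ ≤ 1 := by simpa [mem_closedBall, dist_zero_right] using hw
      have hex : ∃ m : ℕ, c ^ m < ‖w‖ := exists_pow_lt_of_lt_one hw0 hc1
      have hm := Nat.find_spec hex
      have hm0 : Nat.find hex ≠ 0 := by
        intro h
        rw [h, pow_zero] at hm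
        linarith
      obtain ⟨k, hk⟩ : ∃ k, Nat.find hex = k + 1 :=
        ⟨Nat.find hex - 1, (Nat.succ_pred_eq_of_pos (Nat.pos_of_ne_zero hm0)).symm⟩
      refine mem_iUnion.2 ⟨k, ?_, ?_⟩
      · have := Nat.find_min hex (by omega : k < Nat.find hex)
        simpa [mem_closedBall, dist_zero_right] using le_of_not_gt this
      · rw [hk] at hm
        simp only [mem_closedBall, dist_zero_right, not_le]
        exact hm
  calc ∫⁻ z in closedBall (0 : EuclideanSpace ℝ (Fin n)) 1, ENNReal.ofReal (‖z‖ ^ a)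
      ≤ ∫⁻ z in ({0} ∪ ⋃ k, S k : Set (EuclideanSpace ℝ (Fin n))), ENNReal.ofReal (‖z‖ ^ a) :=
        lintegral_mono_set hcover
    _ ≤ (∫⁻ z in ({0} : Set (EuclideanSpace ℝ (Fin n))), ENNReal.ofReal (‖z‖ ^ a))
        + ∫⁻ z in (⋃ k, S k), ENNReal.ofReal (‖z‖ ^ a) := lintegral_union_le _ _ _
    _ < ∞ := by
        have h0 : (∫⁻ z in ({0} : Set (EuclideanSpace ℝ (Fin n))), ENNReal.ofReal (‖z‖ ^ a)) = 0 := by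
          rw [lintegral_singleton]
          simp [Real.zero_rpow (ne_of_lt ha0)]
        rw [h0, zero_add]
        have hsum : ∫⁻ z in (⋃ k, S k), ENNReal.ofReal (‖z‖ ^ a)
            ≤ ∑' k, ∫⁻ z in S k, ENNReal.ofReal (‖z‖ ^ a) := lintegral_iUnion_le _ _
        refine lt_of_le_of_lt hsum ?_
        -- bound each term
        set V : ℝ≥0∞ := volume (ball (0 : EuclideanSpace ℝ (Fin n)) 1) with hV
        have hVfin : V < ∞ := measure_ball_lt_top
        set q : ℝ≥0∞ := ENNReal.ofReal (c ^ (a + n)) with hq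
        have hterm : ∀ k : ℕ, ∫⁻ z in S k, ENNReal.ofReal (‖z‖ ^ a)
            ≤ (ENNReal.ofReal (c ^ a) * V) * q ^ k := by
          intro k
          have hck1 : (0:ℝ) < c ^ (k+1) := by positivity
          have hstep : ∫⁻ z in S k, ENNReal.ofReal (‖z‖ ^ a)
              ≤ ∫⁻ _ in S k, ENNReal.ofReal ((c ^ (k+1)) ^ a) := by
            apply setLIntegral_mono measurable_const
            intro z hz
            apply ENNReal.ofReal_le_ofReal
            apply Real.rpow_le_rpow_of_nonpos hck1 _ ha0.le
            have := hz.2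
            simp only [mem_closedBall, dist_zero_right, not_le] at this
            exact this.le
          rw [setLIntegral_const] at hstep
          have hmeas : volume (S k) ≤ ENNReal.ofReal ((c ^ k) ^ (n:ℕ)) * V := by
            calc volume (S k) ≤ volume (closedBall (0 : EuclideanSpace ℝ (Fin n)) (c ^ k)) :=
                  measure_mono diff_subset
              _ = ENNReal.ofReal ((c ^ k) ^ Module.finrank ℝ (EuclideanSpace ℝ (Fin n))) * V :=
                  Measure.addHaar_closedBall _ _ (by positivity)
              _ = ENNReal.ofReal ((c ^ k) ^ (n:ℕ)) * V := by rw [finrank_euclideanSpace_fin]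
          refine hstep.trans ?_
          calc ENNReal.ofReal ((c ^ (k+1)) ^ a) * volume (S k)
              ≤ ENNReal.ofReal ((c ^ (k+1)) ^ a) * (ENNReal.ofReal ((c ^ k) ^ (n:ℕ)) * V) := by
                exact mul_le_mul_right hmeas _
            _ = (ENNReal.ofReal (c ^ a) * V) * q ^ k := by
                rw [← ENNReal.ofReal_pow (by positivity : (0:ℝ) ≤ c ^ (a + n))]
                rw [← mul_assoc, ← ENNReal.ofReal_mul (by positivity)]
                rw [mul_comm (ENNReal.ofReal (c ^ a)) V, mul_assoc,
                  ← ENNReal.ofReal_mul (by positivity), mul_comm V _]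
                congr 2
                have e1 : ((c:ℝ) ^ (k+1)) ^ a = c ^ (((k:ℝ)+1) * a) := by
                  rw [← Real.rpow_natCast c (k+1), ← Real.rpow_mul hc0.le]
                  push_cast
                  ring_nf
                have e2 : ((c:ℝ) ^ k) ^ (n:ℕ) = c ^ ((k:ℝ) * n) := by
                  rw [← Real.rpow_natCast c k, ← Real.rpow_natCast _ n, ← Real.rpow_mul hc0.le]
                have e3 : (c ^ (a + (n:ℝ))) ^ k = c ^ ((a + n) * (k:ℝ)) := by
                  rw [← Real.rpow_natCast (c ^ (a + (n:ℝ))) k, ← Real.rpow_mul hc0.le]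
                rw [e1, e2, e3, ← Real.rpow_add hc0, ← Real.rpow_add hc0]
                congr 1
                ring
        have := ENNReal.tsum_le_tsum hterm
        refine lt_of_le_of_lt this ?_
        rw [ENNReal.tsum_mul_left, ENNReal.tsum_geometric]
        have hq1 : q < 1 := by
          rw [hq, ← ENNReal.ofReal_one]
          apply (ENNReal.ofReal_lt_ofReal_iff_of_nonneg (by positivity)).mpr
          apply Real.rpow_lt_one hc0.le hc1
          linarith
        apply ENNReal.mul_lt_top
        · exact ENNReal.mul_lt_top ENNReal.ofReal_lt_top hVfin
        · rw [ENNReal.inv_lt_top]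
          exact tsub_pos_iff_lt.mpr hq1

lemma aux_trans (n : ℕ) (x : EuclideanSpace ℝ (Fin n)) (a ρ : ℝ) :
    ∫⁻ y in closedBall x ρ, ENNReal.ofReal (‖x - y‖ ^ a)
      = ∫⁻ z in closedBall (0 : EuclideanSpace ℝ (Fin n)) ρ, ENNReal.ofReal (‖z‖ ^ a) := by
  have hms : MeasurableSet (closedBall (0 : EuclideanSpace ℝ (Fin n)) ρ) :=
    measurableSet_closedBall
  have h := (Measure.measurePreserving_sub_left (volume : Measure (EuclideanSpace ℝ (Fin n))) x)
  have hg : Measurable fun z : EuclideanSpace ℝ (Fin n) =>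
      (closedBall (0 : EuclideanSpace ℝ (Fin n)) ρ).indicator
        (fun z => ENNReal.ofReal (‖z‖ ^ a)) z := by
    apply Measurable.indicator _ hms
    fun_prop
  have := h.lintegral_comp hg
  rw [← lintegral_indicator hms, ← this]
  rw [← lintegral_indicator measurableSet_closedBall]
  apply lintegral_congr
  intro y
  by_cases hy : y ∈ closedBall x ρ
  · have h1 : x - y ∈ closedBall (0 : EuclideanSpace ℝ (Fin n)) ρ := by
      simp only [mem_closedBall, dist_zero_right] at *
      rw [← dist_eq_norm, dist_comm]
      exact hy
    rw [Set.indicator_of_mem hy, Set.indicator_of_mem h1]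
  · have h1 : x - y ∉ closedBall (0 : EuclideanSpace ℝ (Fin n)) ρ := by
      simp only [mem_closedBall, dist_zero_right] at *
      rw [← dist_eq_norm, dist_comm]
      exact hy
    rw [Set.indicator_of_notMem hy, Set.indicator_of_notMem h1]

/-- decay of the Riesz potential of a function with decay
    `(1+|y|²)^{−(n+2s)/2}`. -/
theorem stmt_12 (n : ℕ) (s : ℝ) (hs : 0 < 2 * s) (hns : 2 * s < (n : ℝ))
    (F : EuclideanSpace ℝ (Fin n) → ℝ) (hF : Measurable F)
    (C : ℝ) (hC : 0 < C)
    (hbound : ∀ y, |F y| ≤ C * (1 + ‖y‖ ^ 2) ^ (-(((n : ℝ) + 2 * s) / 2))) :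
    ∃ C' : ℝ, 0 < C' ∧
      ∀ x : EuclideanSpace ℝ (Fin n), 2 ≤ ‖x‖ →
        ∫⁻ y, ENNReal.ofReal (‖x - y‖ ^ (2 * s - (n : ℝ)) * |F y|)
          ≤ ENNReal.ofReal (C' * ‖x‖ ^ (2 * s - (n : ℝ))) := by
  set p : ℝ := (n : ℝ) + 2 * s with hp
  set a : ℝ := 2 * s - (n : ℝ) with ha
  have hnp : (n : ℝ) < p := by rw [hp]; linarith
  have ha0 : a < 0 := by rw [ha]; linarith
  have han : -(n : ℝ) < a := by rw [ha]; linarith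
  set I : ℝ≥0∞ := ∫⁻ y : EuclideanSpace ℝ (Fin n),
      ENNReal.ofReal ((1 + ‖y‖ ^ 2) ^ (-p / 2)) with hIdef
  set J : ℝ≥0∞ := ∫⁻ z in closedBall (0 : EuclideanSpace ℝ (Fin n)) 1,
      ENNReal.ofReal (‖z‖ ^ a) with hJdef
  set K : ℝ≥0∞ := ∫⁻ z in (closedBall (0 : EuclideanSpace ℝ (Fin n)) 1)ᶜ,
      ENNReal.ofReal (‖z‖ ^ (-p)) with hKdef
  have hI : I < ∞ := aux_I n hnp
  have hJ : J < ∞ := aux_J n han ha0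
  have hK : K < ∞ := aux_K n hnp
  set M : ℝ≥0∞ := ENNReal.ofReal C * (I + J + K) with hMdef
  have hMfin : M ≠ ∞ := by
    apply ENNReal.mul_ne_top ENNReal.ofReal_ne_top
    exact (ENNReal.add_lt_top.mpr ⟨ENNReal.add_lt_top.mpr ⟨hI, hJ⟩, hK⟩).ne
  refine ⟨2 ^ ((n : ℝ) - 2 * s) * (M.toReal + 1), by positivity, ?_⟩
  intro x hx
  set R : ℝ := ‖x‖ with hRdef
  have hR0 : 0 < R := by linarith
  set ρ : ℝ := R / 2 with hρdef
  have hρ1 : 1 ≤ ρ := by rw [hρdef]; linarith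
  have hρ0 : 0 < ρ := by linarith
  set A : Set (EuclideanSpace ℝ (Fin n)) := closedBall 0 ρ with hAdef
  set B : Set (EuclideanSpace ℝ (Fin n)) := closedBall x ρ with hBdef
  have hAm : MeasurableSet A := measurableSet_closedBall
  have hBm : MeasurableSet B := measurableSet_closedBall
  -- preimage identities
  have hpre : (fun w : EuclideanSpace ℝ (Fin n) => ρ • w) ⁻¹' A = closedBall 0 1 := by
    ext w
    simp only [hAdef, mem_preimage, mem_closedBall, dist_zero_right, norm_smul,
      Real.norm_eq_abs, abs_of_pos hρ0]
    exact mul_le_iff_le_one_right hρ0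
  have hpreC : (fun w : EuclideanSpace ℝ (Fin n) => ρ • w) ⁻¹' Aᶜ =
      (closedBall (0 : EuclideanSpace ℝ (Fin n)) 1)ᶜ := by
    rw [Set.preimage_compl, hpre]
  -- pointwise facts
  have fact1 : ∀ y ∈ A, ENNReal.ofReal (‖x - y‖ ^ a) ≤ ENNReal.ofReal (ρ ^ a) := by
    intro y hy
    have hy' : ‖y‖ ≤ ρ := by simpa [hAdef, mem_closedBall, dist_zero_right] using hy
    have h1 : ρ ≤ ‖x - y‖ := by
      have := norm_sub_norm_le x y
      have : R - ‖y‖ ≤ ‖x - y‖ := this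
      rw [hρdef] at *
      linarith
    exact ENNReal.ofReal_le_ofReal (Real.rpow_le_rpow_of_nonpos hρ0 h1 ha0.le)
  have fact2 : ∀ y ∈ Aᶜ \ B, ENNReal.ofReal (‖x - y‖ ^ a) ≤ ENNReal.ofReal (ρ ^ a) := by
    intro y hy
    have hy' : y ∉ B := hy.2
    have h1 : ρ ≤ ‖x - y‖ := by
      simp only [hBdef, mem_closedBall, not_le] at hy'
      rw [← dist_eq_norm, dist_comm]
      exact hy'.le
    exact ENNReal.ofReal_le_ofReal (Real.rpow_le_rpow_of_nonpos hρ0 h1 ha0.le)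
  have factnorm : ∀ y ∈ Aᶜ, ρ ≤ ‖y‖ := by
    intro y hy
    simp only [hAdef, mem_compl_iff, mem_closedBall, dist_zero_right, not_le] at hy
    exact hy.le
  have fact3 : ∀ y ∈ Aᶜ, ENNReal.ofReal (|F y|) ≤ ENNReal.ofReal (C * ‖y‖ ^ (-p)) := by
    intro y hy
    have hyρ : ρ ≤ ‖y‖ := factnorm y hy
    have hy0 : 0 < ‖y‖ := lt_of_lt_of_le hρ0 hyρ
    apply ENNReal.ofReal_le_ofReal
    calc |F y| ≤ C * (1 + ‖y‖ ^ 2) ^ (-(((n : ℝ) + 2 * s) / 2)) := hbound y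
      _ ≤ C * (‖y‖ ^ 2) ^ (-(p / 2)) := by
          apply mul_le_mul_of_nonneg_left _ hC.le
          rw [hp]
          apply Real.rpow_le_rpow_of_nonpos (by positivity) (by linarith [sq_nonneg ‖y‖])
          have : (0:ℝ) < (n : ℝ) + 2 * s := by linarith [Nat.cast_nonneg (α := ℝ) n]
          linarith
      _ = C * ‖y‖ ^ (-p) := by
          congr 1
          rw [← Real.rpow_natCast ‖y‖ 2, ← Real.rpow_mul (norm_nonneg y)]
          congr 1
          push_cast
          ring
  have fact4 : ∀ y ∈ Aᶜ, ENNReal.ofReal (C * ‖y‖ ^ (-p)) ≤ ENNReal.ofReal (C * ρ ^ (-p)) := by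
    intro y hy
    apply ENNReal.ofReal_le_ofReal
    apply mul_le_mul_of_nonneg_left _ hC.le
    exact Real.rpow_le_rpow_of_nonpos hρ0 (factnorm y hy) (by rw [hp]; linarith [Nat.cast_nonneg (α := ℝ) n])
  -- rewrite integrand
  have hsplit0 : ∫⁻ y, ENNReal.ofReal (‖x - y‖ ^ a * |F y|)
      = ∫⁻ y, ENNReal.ofReal (‖x - y‖ ^ a) * ENNReal.ofReal (|F y|) :=
    lintegral_congr fun y => ENNReal.ofReal_mul (Real.rpow_nonneg (norm_nonneg _) _)
  rw [hsplit0]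
  -- split domain
  rw [← lintegral_add_compl (fun y => ENNReal.ofReal (‖x - y‖ ^ a) * ENNReal.ofReal (|F y|)) hAm]
  -- T1 bound
  have hT1 : ∫⁻ y in A, ENNReal.ofReal (‖x - y‖ ^ a) * ENNReal.ofReal (|F y|)
      ≤ ENNReal.ofReal (ρ ^ a) * (ENNReal.ofReal C * I) := by
    calc ∫⁻ y in A, ENNReal.ofReal (‖x - y‖ ^ a) * ENNReal.ofReal (|F y|)
        ≤ ∫⁻ y in A, ENNReal.ofReal (ρ ^ a) *
            (ENNReal.ofReal C * ENNReal.ofReal ((1 + ‖y‖ ^ 2) ^ (-p / 2))) := by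
          apply setLIntegral_mono' hAm
          intro y hy
          apply mul_le_mul' (fact1 y hy)
          rw [← ENNReal.ofReal_mul hC.le]
          apply ENNReal.ofReal_le_ofReal
          calc |F y| ≤ C * (1 + ‖y‖ ^ 2) ^ (-(((n : ℝ) + 2 * s) / 2)) := hbound y
            _ = C * (1 + ‖y‖ ^ 2) ^ (-p / 2) := by rw [hp, neg_div]
      _ ≤ ∫⁻ y, ENNReal.ofReal (ρ ^ a) *
            (ENNReal.ofReal C * ENNReal.ofReal ((1 + ‖y‖ ^ 2) ^ (-p / 2))) :=
          setLIntegral_le_lintegral _ _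
      _ = ENNReal.ofReal (ρ ^ a) * (ENNReal.ofReal C * I) := by
          rw [lintegral_const_mul' _ _ ENNReal.ofReal_ne_top,
            lintegral_const_mul' _ _ ENNReal.ofReal_ne_top]
  -- T2 bound
  have hT2 : ∫⁻ y in Aᶜ, ENNReal.ofReal (‖x - y‖ ^ a) * ENNReal.ofReal (|F y|)
      ≤ ENNReal.ofReal (ρ ^ a) * (ENNReal.ofReal C * J)
        + ENNReal.ofReal (ρ ^ a) * (ENNReal.ofReal C * K) := by
    have step1 : ∫⁻ y in Aᶜ, ENNReal.ofReal (‖x - y‖ ^ a) * ENNReal.ofReal (|F y|)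
        ≤ ∫⁻ y in Aᶜ, ENNReal.ofReal (‖x - y‖ ^ a) * ENNReal.ofReal (C * ‖y‖ ^ (-p)) :=
      setLIntegral_mono' hAm.compl fun y hy => mul_le_mul' le_rfl (fact3 y hy)
    have hsplitset : (Aᶜ : Set (EuclideanSpace ℝ (Fin n))) = (Aᶜ ∩ B) ∪ (Aᶜ \ B) :=
      (Set.inter_union_diff Aᶜ B).symm
    have step2 : ∫⁻ y in Aᶜ, ENNReal.ofReal (‖x - y‖ ^ a) * ENNReal.ofReal (C * ‖y‖ ^ (-p))
        ≤ (∫⁻ y in Aᶜ ∩ B, ENNReal.ofReal (‖x - y‖ ^ a) * ENNReal.ofReal (C * ‖y‖ ^ (-p)))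
          + ∫⁻ y in Aᶜ \ B, ENNReal.ofReal (‖x - y‖ ^ a) * ENNReal.ofReal (C * ‖y‖ ^ (-p)) := by
      nth_rewrite 1 [hsplitset]
      exact lintegral_union_le _ _ _
    -- T2a
    have hT2a : ∫⁻ y in Aᶜ ∩ B, ENNReal.ofReal (‖x - y‖ ^ a) * ENNReal.ofReal (C * ‖y‖ ^ (-p))
        ≤ ENNReal.ofReal (ρ ^ a) * (ENNReal.ofReal C * J) := by
      calc ∫⁻ y in Aᶜ ∩ B, ENNReal.ofReal (‖x - y‖ ^ a) * ENNReal.ofReal (C * ‖y‖ ^ (-p))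
          ≤ ∫⁻ y in Aᶜ ∩ B, ENNReal.ofReal (C * ρ ^ (-p)) * ENNReal.ofReal (‖x - y‖ ^ a) := by
            apply setLIntegral_mono' (hAm.compl.inter hBm)
            intro y hy
            rw [mul_comm]
            exact mul_le_mul' (fact4 y hy.1) le_rfl
        _ ≤ ∫⁻ y in B, ENNReal.ofReal (C * ρ ^ (-p)) * ENNReal.ofReal (‖x - y‖ ^ a) :=
            lintegral_mono_set inter_subset_right
        _ = ENNReal.ofReal (C * ρ ^ (-p)) * ∫⁻ y in B, ENNReal.ofReal (‖x - y‖ ^ a) :=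
            lintegral_const_mul' _ _ ENNReal.ofReal_ne_top
        _ = ENNReal.ofReal (C * ρ ^ (-p)) * (ENNReal.ofReal (ρ ^ (n:ℝ) * ρ ^ a) * J) := by
            rw [hBdef, aux_trans n x a ρ, aux_set_scale n a hρ0 _ measurableSet_closedBall, hpre]
        _ ≤ ENNReal.ofReal (ρ ^ a) * (ENNReal.ofReal C * J) := by
            rw [← mul_assoc, ← ENNReal.ofReal_mul (by positivity)]
            have heq : C * ρ ^ (-p) * (ρ ^ (n:ℝ) * ρ ^ a) = C * ρ ^ (-p + ((n:ℝ) + a)) := by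
              rw [Real.rpow_add hρ0, Real.rpow_add hρ0]
              ring
            rw [heq]
            have hle : ρ ^ (-p + ((n:ℝ) + a)) ≤ ρ ^ a := by
              apply Real.rpow_le_rpow_of_exponent_le hρ1
              rw [hp, ha]
              linarith
            calc ENNReal.ofReal (C * ρ ^ (-p + ((n:ℝ) + a))) * J
                ≤ ENNReal.ofReal (C * ρ ^ a) * J := by
                  apply mul_le_mul'
                  · exact ENNReal.ofReal_le_ofReal (mul_le_mul_of_nonneg_left hle hC.le)
                  · exact le_rfl
              _ = ENNReal.ofReal (ρ ^ a) * (ENNReal.ofReal C * J) := by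
                  rw [mul_comm C _, ENNReal.ofReal_mul (by positivity), mul_assoc]
    -- T2b
    have hT2b : ∫⁻ y in Aᶜ \ B, ENNReal.ofReal (‖x - y‖ ^ a) * ENNReal.ofReal (C * ‖y‖ ^ (-p))
        ≤ ENNReal.ofReal (ρ ^ a) * (ENNReal.ofReal C * K) := by
      calc ∫⁻ y in Aᶜ \ B, ENNReal.ofReal (‖x - y‖ ^ a) * ENNReal.ofReal (C * ‖y‖ ^ (-p))
          ≤ ∫⁻ y in Aᶜ \ B, ENNReal.ofReal (ρ ^ a) * ENNReal.ofReal (C * ‖y‖ ^ (-p)) := by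
            apply setLIntegral_mono' (hAm.compl.diff hBm)
            intro y hy
            exact mul_le_mul' (fact2 y hy) le_rfl
        _ ≤ ∫⁻ y in Aᶜ, ENNReal.ofReal (ρ ^ a) * ENNReal.ofReal (C * ‖y‖ ^ (-p)) :=
            lintegral_mono_set diff_subset
        _ = ENNReal.ofReal (ρ ^ a) * ∫⁻ y in Aᶜ, ENNReal.ofReal (C * ‖y‖ ^ (-p)) :=
            lintegral_const_mul' _ _ ENNReal.ofReal_ne_top
        _ = ENNReal.ofReal (ρ ^ a) * (ENNReal.ofReal C * ∫⁻ y in Aᶜ, ENNReal.ofReal (‖y‖ ^ (-p))) := by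
            congr 1
            simp_rw [ENNReal.ofReal_mul hC.le]
            exact lintegral_const_mul' _ _ ENNReal.ofReal_ne_top
        _ ≤ ENNReal.ofReal (ρ ^ a) * (ENNReal.ofReal C * K) := by
            apply mul_le_mul' le_rfl
            apply mul_le_mul' le_rfl
            rw [aux_set_scale n (-p) hρ0 _ hAm.compl, hpreC]
            calc ENNReal.ofReal (ρ ^ (n:ℝ) * ρ ^ (-p)) * K ≤ 1 * K := by
                  apply mul_le_mul' _ le_rfl
                  rw [← ENNReal.ofReal_one]
                  apply ENNReal.ofReal_le_ofReal
                  rw [← Real.rpow_add hρ0]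
                  apply Real.rpow_le_one_of_one_le_of_nonpos hρ1
                  rw [hp]
                  linarith
              _ = K := one_mul K
    calc ∫⁻ y in Aᶜ, ENNReal.ofReal (‖x - y‖ ^ a) * ENNReal.ofReal (|F y|)
        ≤ ∫⁻ y in Aᶜ, ENNReal.ofReal (‖x - y‖ ^ a) * ENNReal.ofReal (C * ‖y‖ ^ (-p)) := step1
      _ ≤ _ := step2
      _ ≤ _ := add_le_add hT2a hT2b
  -- combine
  calc (∫⁻ y in A, ENNReal.ofReal (‖x - y‖ ^ a) * ENNReal.ofReal (|F y|))
        + ∫⁻ y in Aᶜ, ENNReal.ofReal (‖x - y‖ ^ a) * ENNReal.ofReal (|F y|)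
      ≤ ENNReal.ofReal (ρ ^ a) * (ENNReal.ofReal C * I)
        + (ENNReal.ofReal (ρ ^ a) * (ENNReal.ofReal C * J)
          + ENNReal.ofReal (ρ ^ a) * (ENNReal.ofReal C * K)) := add_le_add hT1 hT2
    _ = ENNReal.ofReal (ρ ^ a) * M := by rw [hMdef]; ring
    _ ≤ ENNReal.ofReal (ρ ^ a) * ENNReal.ofReal (M.toReal + 1) := by
        apply mul_le_mul' le_rfl
        conv_lhs => rw [← ENNReal.ofReal_toReal hMfin]
        exact ENNReal.ofReal_le_ofReal (by linarith [ENNReal.toReal_nonneg (a := M)])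
    _ ≤ ENNReal.ofReal (2 ^ ((n : ℝ) - 2 * s) * (M.toReal + 1) * R ^ a) := by
        rw [← ENNReal.ofReal_mul (by positivity)]
        apply ENNReal.ofReal_le_ofReal
        have hρa : ρ ^ a = 2 ^ ((n : ℝ) - 2 * s) * R ^ a := by
          rw [hρdef, Real.div_rpow hR0.le (by norm_num), div_eq_mul_inv,
            ← Real.rpow_neg (by norm_num : (0:ℝ) ≤ 2)]
          rw [ha]
          ring_nf
        rw [hρa]
        ring_nf
        exact le_refl _
end

section
/- Let n be an integer and s a real number with n > 2s > 0, let x ∈ ℝⁿ, and let λ > 0 satisfy λ² ≤ 1 + |x|². Then for every y ∈ ℝⁿ with |y − x| ≥ λ one has (λ/|y − x|)^{n−2s} · (1 + |x + λ²(y − x)/|y − x|²|²)^{−(n−2s)/2} ≤ (1 + |y|²)^{−(n−2s)/2}. Consequently, the standard bubble u(ξ) = C(2/(1+|ξ|²))^{(n−2s)/2} (C > 0 a constant) satisfies u_{x,λ}(y) ≤ u(y) for all |y − x| ≥ λ whenever 0 < λ ≤ √(1+|x|²). -/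
/-- for `0 < λ` with `λ² ≤ 1 + |x|²` and `|y − x| ≥ λ`, the bubble-comparison
    inequality holds; consequently the standard bubble `ξ ↦ C (2/(1+|ξ|²))^{(n−2s)/2}`
    dominates its own Kelvin transform outside `B(x,λ)`. -/
theorem stmt_17 (n : ℕ) (s : ℝ) (hs : 0 < 2 * s) (hns : 2 * s < (n : ℝ))
    (x : EuclideanSpace ℝ (Fin n)) (l : ℝ) (hl : 0 < l) (hl2 : l ^ 2 ≤ 1 + ‖x‖ ^ 2) :
    (∀ y : EuclideanSpace ℝ (Fin n), l ≤ ‖y - x‖ →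
      (l / ‖y - x‖) ^ ((n : ℝ) - 2 * s)
          * (1 + ‖x + (l ^ 2 / ‖y - x‖ ^ 2) • (y - x)‖ ^ 2) ^ (-(((n : ℝ) - 2 * s) / 2))
        ≤ (1 + ‖y‖ ^ 2) ^ (-(((n : ℝ) - 2 * s) / 2))) ∧
    (∀ C : ℝ, 0 < C →
      ∀ y : EuclideanSpace ℝ (Fin n), l ≤ ‖y - x‖ →
        (l / ‖y - x‖) ^ ((n : ℝ) - 2 * s)
            * (C * (2 / (1 + ‖x + (l ^ 2 / ‖y - x‖ ^ 2) • (y - x)‖ ^ 2))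
                ^ (((n : ℝ) - 2 * s) / 2))
          ≤ C * (2 / (1 + ‖y‖ ^ 2)) ^ (((n : ℝ) - 2 * s) / 2)) := by
  have hp : 0 < ((n : ℝ) - 2 * s) / 2 := by linarith
  have hmain : ∀ y : EuclideanSpace ℝ (Fin n), l ≤ ‖y - x‖ →
      (l / ‖y - x‖) ^ ((n : ℝ) - 2 * s)
          * (1 + ‖x + (l ^ 2 / ‖y - x‖ ^ 2) • (y - x)‖ ^ 2) ^ (-(((n : ℝ) - 2 * s) / 2))
        ≤ (1 + ‖y‖ ^ 2) ^ (-(((n : ℝ) - 2 * s) / 2)) := by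
    intro y hy
    set v : EuclideanSpace ℝ (Fin n) := y - x with hv
    have hr : 0 < ‖v‖ := lt_of_lt_of_le hl hy
    set r : ℝ := ‖v‖ with hrdef
    set c : ℝ := l ^ 2 / r ^ 2 with hcdef
    have hc : 0 < c := by positivity
    have hcr : c * r ^ 2 = l ^ 2 := div_mul_cancel₀ _ (by positivity)
    have hc1 : c ≤ 1 := by
      rw [hcdef, div_le_one (by positivity)]
      exact pow_le_pow_left₀ hl.le hy 2
    set A : ℝ := 1 + ‖x + c • v‖ ^ 2 with hAdef
    set B : ℝ := 1 + ‖y‖ ^ 2 with hBdef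
    have hA : 0 < A := by positivity
    have hB : 0 < B := by positivity
    have hyx : y = x + v := by simp [hv]
    have hncv : ‖c • v‖ = c * r := by rw [norm_smul, Real.norm_eq_abs, abs_of_pos hc]
    have hny : ‖y‖ ^ 2 = ‖x‖ ^ 2 + 2 * inner ℝ x v + r ^ 2 := by
      rw [hyx, norm_add_sq_real]
    have hnxi : ‖x + c • v‖ ^ 2 = ‖x‖ ^ 2 + 2 * (c * inner ℝ x v) + c ^ 2 * r ^ 2 := by
      rw [norm_add_sq_real, real_inner_smul_right, hncv]; ring
    have key : (l / r) ^ 2 * B ≤ A := by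
      have hqc : (l / r) ^ 2 = c := by rw [hcdef, div_pow]
      rw [hqc, hAdef, hBdef, hny, hnxi]
      nlinarith [mul_nonneg (sub_nonneg.2 hc1) (sub_nonneg.2 hl2), hcr, hc.le]
    have hq : 0 ≤ l / r := by positivity
    have h2p : (n : ℝ) - 2 * s = 2 * (((n : ℝ) - 2 * s) / 2) := by ring
    set p : ℝ := ((n : ℝ) - 2 * s) / 2 with hpdef
    have hstep : (l / r) ^ 2 / A ≤ 1 / B := by
      rw [div_le_div_iff₀ hA hB]
      linarith
    calc (l / r) ^ ((n : ℝ) - 2 * s) * A ^ (-p)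
        = ((l / r) ^ 2 / A) ^ p := by
          rw [h2p, Real.rpow_mul hq, Real.rpow_two,
            Real.rpow_neg hA.le, ← Real.inv_rpow hA.le,
            ← Real.mul_rpow (by positivity) (by positivity), div_eq_mul_inv]
          rw [div_eq_mul_inv]
      _ ≤ (1 / B) ^ p := Real.rpow_le_rpow (by positivity) hstep hp.le
      _ = B ^ (-p) := by
          rw [Real.rpow_neg hB.le, one_div, Real.inv_rpow hB.le]
  refine ⟨hmain, ?_⟩
  intro C hC y hy
  set A : ℝ := 1 + ‖x + (l ^ 2 / ‖y - x‖ ^ 2) • (y - x)‖ ^ 2 with hAdef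
  set B : ℝ := 1 + ‖y‖ ^ 2 with hBdef
  have hA : 0 < A := by positivity
  have hB : 0 < B := by positivity
  set p : ℝ := ((n : ℝ) - 2 * s) / 2 with hpdef
  have hdivA : (2 / A) ^ p = 2 ^ p * A ^ (-p) := by
    rw [Real.div_rpow (by norm_num) hA.le, Real.rpow_neg hA.le, div_eq_mul_inv]
  have hdivB : (2 / B) ^ p = 2 ^ p * B ^ (-p) := by
    rw [Real.div_rpow (by norm_num) hB.le, Real.rpow_neg hB.le, div_eq_mul_inv]
  rw [hdivA, hdivB]
  have h1 := hmain y hy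
  calc (l / ‖y - x‖) ^ ((n : ℝ) - 2 * s) * (C * (2 ^ p * A ^ (-p)))
      = (C * 2 ^ p) * ((l / ‖y - x‖) ^ ((n : ℝ) - 2 * s) * A ^ (-p)) := by ring
    _ ≤ (C * 2 ^ p) * (B ^ (-p)) := by
        apply mul_le_mul_of_nonneg_left h1 (by positivity)
    _ = C * (2 ^ p * B ^ (-p)) := by ring
end

section
/- Let n be an integer and s a real number with n > 2s > 0, let x ∈ ℝⁿ, λ > 0, and let y ∈ ℝⁿ with |y − x| ≥ λ. Then the inequality (λ/|y − x|)^{n−2s} · (1 + |x + λ²(y − x)/|y − x|²|²)^{−(n−2s)/2} ≤ (1 + |y|²)^{−(n−2s)/2} holds if and only if (λ² − |y − x|²)(λ² − 1 − |x|²) ≥ 0. -/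
open Real

/-- the bubble-comparison inequality holds if and only if
    `(λ² − |y − x|²)(λ² − 1 − |x|²) ≥ 0`. -/
theorem stmt_18 (n : ℕ) (s : ℝ) (hs : 0 < 2 * s) (hns : 2 * s < (n : ℝ))
    (x : EuclideanSpace ℝ (Fin n)) (l : ℝ) (hl : 0 < l)
    (y : EuclideanSpace ℝ (Fin n)) (hy : l ≤ ‖y - x‖) :
    ((l / ‖y - x‖) ^ ((n : ℝ) - 2 * s)
          * (1 + ‖x + (l ^ 2 / ‖y - x‖ ^ 2) • (y - x)‖ ^ 2) ^ (-(((n : ℝ) - 2 * s) / 2))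
        ≤ (1 + ‖y‖ ^ 2) ^ (-(((n : ℝ) - 2 * s) / 2)))
      ↔ 0 ≤ (l ^ 2 - ‖y - x‖ ^ 2) * (l ^ 2 - 1 - ‖x‖ ^ 2) := by
  have hr : 0 < ‖y - x‖ := lt_of_lt_of_le hl hy
  set r := ‖y - x‖ with hrdef
  set p := (n : ℝ) - 2 * s with hpdef
  have hp : 0 < p := by rw [hpdef]; linarith
  have hp2 : 0 < p / 2 := by linarith
  set t : ℝ := inner ℝ x (y - x) with htdef
  have hz : ‖x + (l ^ 2 / r ^ 2) • (y - x)‖ ^ 2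
      = ‖x‖ ^ 2 + 2 * (l ^ 2 / r ^ 2) * t + (l ^ 2 / r ^ 2) ^ 2 * r ^ 2 := by
    rw [@norm_add_sq_real, real_inner_smul_right, norm_smul]
    simp only [Real.norm_eq_abs, mul_pow, sq_abs, ← hrdef]
    ring
  have hy2 : ‖y‖ ^ 2 = ‖x‖ ^ 2 + 2 * t + r ^ 2 := by
    have hxy : x + (y - x) = y := by abel
    rw [← hxy, @norm_add_sq_real]
  set B := 1 + ‖x + (l ^ 2 / r ^ 2) • (y - x)‖ ^ 2 with hBdef
  set C := 1 + ‖y‖ ^ 2 with hCdef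
  have hB : 0 < B := by positivity
  have hC : 0 < C := by positivity
  have key : B - (l / r) ^ 2 * C = (l ^ 2 - r ^ 2) * (l ^ 2 - 1 - ‖x‖ ^ 2) / r ^ 2 := by
    rw [hBdef, hCdef, hz, hy2]
    field_simp
    ring
  have hlr : (0:ℝ) ≤ l / r := by positivity
  have hA : (l / r) ^ p = ((l / r) ^ 2 : ℝ) ^ (p / 2) := by
    rw [← Real.rpow_natCast (l / r) 2, ← Real.rpow_mul hlr]
    congr 1
    push_cast
    ring
  have step1 : ((l / r) ^ p * B ^ (-(p / 2)) ≤ C ^ (-(p / 2)))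
      ↔ ((l / r) ^ 2 * C) ^ (p / 2) ≤ B ^ (p / 2) := by
    rw [hA, Real.rpow_neg hB.le, Real.rpow_neg hC.le, ← div_eq_mul_inv, ← one_div,
      div_le_div_iff₀ (by positivity) (by positivity), one_mul,
      ← Real.mul_rpow (by positivity) hC.le]
  rw [step1, Real.rpow_le_rpow_iff (by positivity) hB.le hp2, ← sub_nonneg, key,
    le_div_iff₀ (by positivity), zero_mul]
end
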